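/- Let L be a symmetric matrix with an orthonormal basis of eigenvectors. For single input b = e_i, the dimension of the controllable subspace of (-L, e_i) equals the number of eigenspaces of L not orthogonal to e_i; in particular, if L has a repeated eigenvalue with eigenspace of dimension k ≥ 2, the uncontrollable subspace with any single input has dimension at least k - 1. -/

import Mathlib

open Matrix

/-- The Kalman controllability matrix `[b, M b, M² b, …, M^{n-1} b]`. -/
def kalman {n m : ℕ} (M : Matrix (Fin n) (Fin n) ℝ) (B : Matrix (Fin n) (Fin m) ℝ) :
    Matrix (Fin n) (Fin n × Fin m) ℝ :=
  Matrix.of fun i p => (M ^ (p.1 : ℕ) * B) i p.2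

section Aux
variable {n : ℕ} (L : Matrix (Fin n) (Fin n) ℝ) (hL : L.IsHermitian)

private noncomputable def uu (j : Fin n) : Fin n → ℝ := hL.eigenvectorBasis j

private lemma hu_dot (j j' : Fin n) :
    uu L hL j ⬝ᵥ uu L hL j' = if j = j' then 1 else 0 := by
  have h := (orthonormal_iff_ite (𝕜 := ℝ)).1 hL.eigenvectorBasis.orthonormal j j'
  rw [PiLp.inner_apply] at h
  rw [← h]; simp [dotProduct, uu, mul_comm]

private lemma hexp (x : Fin n → ℝ) : ∑ j, (uu L hL j ⬝ᵥ x) • uu L hL j = x := by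
  have h := (hL.eigenvectorBasis).sum_repr' (WithLp.toLp 2 x)
  have h2 : ∀ j, (inner ℝ (hL.eigenvectorBasis j) (WithLp.toLp 2 x) : ℝ)
      = uu L hL j ⬝ᵥ x := by
    intro j; rw [PiLp.inner_apply]; simp [dotProduct, uu, mul_comm]
  calc ∑ j, (uu L hL j ⬝ᵥ x) • uu L hL j
      = WithLp.ofLp (∑ j, (inner ℝ (hL.eigenvectorBasis j) (WithLp.toLp 2 x) : ℝ) • hL.eigenvectorBasis j) := by
        simp only [h2]; simp [uu]
    _ = x := by rw [h]

private lemma heig (j : Fin n) : L *ᵥ uu L hL j = hL.eigenvalues j • uu L hL j :=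
  hL.mulVec_eigenvectorBasis j

private lemma hpow (t : ℕ) (j : Fin n) :
    (-L) ^ t *ᵥ uu L hL j = (-hL.eigenvalues j) ^ t • uu L hL j := by
  induction t with
  | zero => simp
  | succ t ih =>
    rw [pow_succ', ← mulVec_mulVec, ih, mulVec_smul, neg_mulVec, heig, pow_succ']
    module

private lemma hsym (hs : Lᵀ = L) (x y : Fin n → ℝ) : (L *ᵥ x) ⬝ᵥ y = x ⬝ᵥ (L *ᵥ y) := by
  rw [dotProduct_comm, dotProduct_mulVec]
  conv_lhs => rw [← hs, vecMul_transpose]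
  rw [dotProduct_comm]

private lemma dsum {m : Type*} [Fintype m] {ι : Type*} (s : Finset ι) (v : m → ℝ) (f : ι → m → ℝ) :
    v ⬝ᵥ (∑ j ∈ s, f j) = ∑ j ∈ s, v ⬝ᵥ f j := by
  simp only [dotProduct, Finset.sum_apply, Finset.mul_sum]
  exact Finset.sum_comm

private lemma sumd {m : Type*} [Fintype m] {ι : Type*} (s : Finset ι) (v : m → ℝ) (f : ι → m → ℝ) :
    (∑ j ∈ s, f j) ⬝ᵥ v = ∑ j ∈ s, f j ⬝ᵥ v := by
  simp only [dotProduct, Finset.sum_apply, Finset.sum_mul]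
  exact Finset.sum_comm

private noncomputable def PP (b₀ : Fin n → ℝ) (ν : ℝ) : Fin n → ℝ :=
  ∑ j ∈ Finset.univ.filter (fun j => hL.eigenvalues j = ν), (uu L hL j ⬝ᵥ b₀) • uu L hL j

private lemma dot_uP (b₀ : Fin n → ℝ) (ν : ℝ) (j : Fin n) :
    uu L hL j ⬝ᵥ PP L hL b₀ ν
      = if hL.eigenvalues j = ν then uu L hL j ⬝ᵥ b₀ else 0 := by
  classical
  rw [PP, dsum]
  simp only [dotProduct_smul, hu_dot, smul_eq_mul, mul_ite, mul_one, mul_zero]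
  rw [Finset.sum_ite_eq]
  simp [Finset.mem_filter]

private lemma P_ortho (b₀ : Fin n → ℝ) (ν ν' : ℝ) (hne : ν ≠ ν') :
    PP L hL b₀ ν ⬝ᵥ PP L hL b₀ ν' = 0 := by
  classical
  rw [PP, sumd]
  apply Finset.sum_eq_zero
  intro j hj
  rw [smul_dotProduct, dot_uP]
  rw [Finset.mem_filter] at hj
  simp [hj.2, hne]

private lemma P_eig (b₀ : Fin n → ℝ) (ν : ℝ) :
    L *ᵥ PP L hL b₀ ν = ν • PP L hL b₀ ν := by
  classical
  rw [PP]
  rw [show (L *ᵥ ∑ j ∈ Finset.univ.filter (fun j => hL.eigenvalues j = ν),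
      (uu L hL j ⬝ᵥ b₀) • uu L hL j) = ∑ j ∈ Finset.univ.filter (fun j => hL.eigenvalues j = ν),
      L *ᵥ ((uu L hL j ⬝ᵥ b₀) • uu L hL j) from map_sum L.mulVecLin _ _]
  rw [Finset.smul_sum]
  apply Finset.sum_congr rfl
  intro j hj
  rw [Finset.mem_filter] at hj
  rw [mulVec_smul, heig, hj.2]
  module

private lemma sum_mulVec' {ι : Type*} (s : Finset ι) (f : ι → Matrix (Fin n) (Fin n) ℝ)
    (v : Fin n → ℝ) : (∑ t ∈ s, f t) *ᵥ v = ∑ t ∈ s, f t *ᵥ v := by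
  exact map_sum (Matrix.mulVec.addMonoidHomLeft v) f s

open Polynomial in
private lemma aeval_mulVec (q : ℝ[X]) (j : Fin n) :
    (Polynomial.aeval (-L) q) *ᵥ uu L hL j = q.eval (-hL.eigenvalues j) • uu L hL j := by
  induction q using Polynomial.induction_on' with
  | add p q hp hq => rw [map_add, add_mulVec, hp, hq, Polynomial.eval_add, add_smul]
  | monomial t a =>
    rw [Polynomial.aeval_monomial, Polynomial.eval_monomial, Algebra.algebraMap_eq_smul_one,
      smul_mul_assoc, one_mul, smul_mulVec, hpow, smul_smul]

private lemma mulVec_expand (M : Matrix (Fin n) (Fin n) ℝ) (b₀ : Fin n → ℝ) :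
    M *ᵥ b₀ = ∑ j, (uu L hL j ⬝ᵥ b₀) • (M *ᵥ uu L hL j) := by
  conv_lhs => rw [← hexp L hL b₀]
  rw [show (M *ᵥ ∑ j, (uu L hL j ⬝ᵥ b₀) • uu L hL j)
      = ∑ j, M *ᵥ ((uu L hL j ⬝ᵥ b₀) • uu L hL j) from map_sum M.mulVecLin _ _]
  exact Finset.sum_congr rfl fun j _ => by rw [mulVec_smul]

private lemma span_eq (b₀ : Fin n → ℝ) :
    Submodule.span ℝ (Set.range fun t : Fin n => (-L) ^ (t : ℕ) *ᵥ b₀)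
      = Submodule.span ℝ (PP L hL b₀ ''
          (Finset.image hL.eigenvalues Finset.univ : Finset ℝ)) := by
  classical
  apply le_antisymm
  · rw [Submodule.span_le]
    rintro x ⟨t, rfl⟩
    show ((-L) ^ (t : ℕ) *ᵥ b₀) ∈ (Submodule.span ℝ (PP L hL b₀ ''
          (Finset.image hL.eigenvalues Finset.univ : Finset ℝ)) : Set (Fin n → ℝ))
    have hb : (-L) ^ (t : ℕ) *ᵥ b₀
        = ∑ ν ∈ Finset.image hL.eigenvalues Finset.univ,
            (-ν) ^ (t : ℕ) • PP L hL b₀ ν := by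
      rw [mulVec_expand L hL]
      rw [← Finset.sum_fiberwise_of_maps_to
        (fun j _ => Finset.mem_image_of_mem hL.eigenvalues (Finset.mem_univ j))
        (fun j => (uu L hL j ⬝ᵥ b₀) • ((-L) ^ (t : ℕ) *ᵥ uu L hL j))]
      apply Finset.sum_congr rfl
      intro ν _
      rw [PP, Finset.smul_sum]
      apply Finset.sum_congr rfl
      intro j hj
      rw [Finset.mem_filter] at hj
      rw [hpow, hj.2, smul_comm]
    rw [hb]
    exact Submodule.sum_mem _ fun ν hν => Submodule.smul_mem _ _
      (Submodule.subset_span ⟨ν, by simpa using hν, rfl⟩)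
  · rw [Submodule.span_le]
    rintro x ⟨ν, hν, rfl⟩
    have hνT : ν ∈ Finset.image hL.eigenvalues Finset.univ := by exact_mod_cast hν
    set T := Finset.image hL.eigenvalues Finset.univ with hT
    have hinj : Set.InjOn (fun z : ℝ => -z) T := fun a _ b _ h => by
      simpa using neg_injective h
    set p := Lagrange.basis T (fun z : ℝ => -z) ν with hp
    have hdeg : p.natDegree < n := by
      have h1 : p.natDegree = T.card - 1 := Lagrange.natDegree_basis hinj hνT
      have h2 : T.card ≤ n := by
        simpa using (Finset.card_image_le (s := (Finset.univ : Finset (Fin n)))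
          (f := hL.eigenvalues))
      have h3 : 0 < T.card := Finset.card_pos.2 ⟨ν, hνT⟩
      omega
    have heval : ∀ j : Fin n, p.eval (-hL.eigenvalues j)
        = if hL.eigenvalues j = ν then 1 else 0 := by
      intro j
      by_cases h : hL.eigenvalues j = ν
      · rw [if_pos h, h]
        exact Lagrange.eval_basis_self hinj hνT
      · rw [if_neg h]
        exact Lagrange.eval_basis_of_ne (fun hc => h hc.symm)
          (Finset.mem_image_of_mem _ (Finset.mem_univ j))
    have hPb : (Polynomial.aeval (-L) p) *ᵥ b₀ = PP L hL b₀ ν := by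
      rw [mulVec_expand]
      rw [PP, ← Finset.sum_filter_add_sum_filter_not Finset.univ
        (fun j => hL.eigenvalues j = ν)]
      have hz : ∑ j ∈ Finset.univ.filter (fun j => ¬ hL.eigenvalues j = ν),
          (uu L hL j ⬝ᵥ b₀) • ((Polynomial.aeval (-L) p) *ᵥ uu L hL j) = 0 := by
        apply Finset.sum_eq_zero
        intro j hj
        rw [Finset.mem_filter] at hj
        rw [aeval_mulVec, heval, if_neg hj.2]
        simp
      rw [hz, add_zero]
      apply Finset.sum_congr rfl
      intro j hj
      rw [Finset.mem_filter] at hj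
      rw [aeval_mulVec, heval, if_pos hj.2, one_smul]
    rw [← hPb, Polynomial.aeval_eq_sum_range' hdeg]
    rw [show ((∑ t ∈ Finset.range n, p.coeff t • (-L) ^ t) *ᵥ b₀)
        = ∑ t ∈ Finset.range n, (p.coeff t • (-L) ^ t) *ᵥ b₀ from by
      rw [sum_mulVec']]
    apply Submodule.sum_mem
    intro t ht
    rw [smul_mulVec]
    exact Submodule.smul_mem _ _
      (Submodule.subset_span ⟨⟨t, Finset.mem_range.1 ht⟩, rfl⟩)

private lemma coeff_orth (hs : Lᵀ = L) (v : Fin n → ℝ) (ν : ℝ) (hv : L *ᵥ v = ν • v)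
    (j : Fin n) (hj : hL.eigenvalues j ≠ ν) : uu L hL j ⬝ᵥ v = 0 := by
  have h1 : (L *ᵥ uu L hL j) ⬝ᵥ v = hL.eigenvalues j * (uu L hL j ⬝ᵥ v) := by
    rw [heig, smul_dotProduct, smul_eq_mul]
  have h2 : uu L hL j ⬝ᵥ (L *ᵥ v) = ν * (uu L hL j ⬝ᵥ v) := by
    rw [hv, dotProduct_smul, smul_eq_mul]
  have h3 := hsym L hs (uu L hL j) v
  rw [h1, h2] at h3
  have h4 : (hL.eigenvalues j - ν) * (uu L hL j ⬝ᵥ v) = 0 := by ring_nf; linarith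
  rcases mul_eq_zero.1 h4 with h | h
  · exact absurd (by linarith : hL.eigenvalues j = ν) hj
  · exact h

private lemma rank_kalman (b : Matrix (Fin n) (Fin 1) ℝ) :
    (kalman (-L) b).rank = Module.finrank ℝ (Submodule.span ℝ
      (Set.range fun t : Fin n => (-L) ^ (t : ℕ) *ᵥ (fun r => b r 0))) := by
  rw [Matrix.rank_eq_finrank_span_cols]
  have hset : Set.range (kalman (-L) b).col
      = Set.range fun t : Fin n => (-L) ^ (t : ℕ) *ᵥ (fun r => b r 0) := by
    ext x
    constructor
    · rintro ⟨⟨t, s⟩, rfl⟩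
      refine ⟨t, ?_⟩
      have hs : s = 0 := Subsingleton.elim _ _
      subst hs
      funext r
      simp [kalman, transpose_apply, mulVec, dotProduct, Matrix.mul_apply]
    · rintro ⟨t, rfl⟩
      exact ⟨(t, 0), by
        funext r
        simp [kalman, transpose_apply, mulVec, dotProduct, Matrix.mul_apply]⟩
  rw [hset]

end Aux



theorem controllable_dim_eq_card_eigenspaces {n : ℕ}
    (L : Matrix (Fin n) (Fin n) ℝ) (hL : L.IsSymm) :
    (∀ i : Fin n,
      (kalman (-L) (Matrix.of fun r (_ : Fin 1) => if r = i then (1:ℝ) else 0)).rank =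
        {μ : ℝ | ∃ v : Fin n → ℝ, L.mulVec v = μ • v ∧ v i ≠ 0}.ncard) ∧
    (∀ (μ : ℝ) (k : ℕ), 2 ≤ k →
      Module.finrank ℝ (LinearMap.ker (Matrix.toLin'
        (L - μ • (1 : Matrix (Fin n) (Fin n) ℝ)))) = k →
      ∀ b : Matrix (Fin n) (Fin 1) ℝ, (kalman (-L) b).rank ≤ n - (k - 1)) := by
  classical
  have hs : Lᵀ = L := hL
  have hL' : L.IsHermitian := by
    rwa [Matrix.IsHermitian, conjTranspose_eq_transpose_of_trivial]
  set T := Finset.image hL'.eigenvalues Finset.univ with hT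
  constructor
  · -- Part 1
    intro i
    set b : Matrix (Fin n) (Fin 1) ℝ :=
      Matrix.of fun r (_ : Fin 1) => if r = i then (1:ℝ) else 0 with hb
    set b₀ : Fin n → ℝ := fun r => b r 0 with hb₀
    have hc : ∀ j, uu L hL' j ⬝ᵥ b₀ = uu L hL' j i := by
      intro j
      simp [hb₀, hb, dotProduct, mul_ite]
    set T₀ := T.filter (fun ν => PP L hL' b₀ ν ≠ 0) with hT₀
    have h1 : (kalman (-L) b).rank
        = Module.finrank ℝ (Submodule.span ℝ (PP L hL' b₀ '' (T : Set ℝ))) := by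
      rw [rank_kalman L b, span_eq L hL']
    have h2 : Submodule.span ℝ (PP L hL' b₀ '' (T : Set ℝ))
        = Submodule.span ℝ (PP L hL' b₀ '' (T₀ : Set ℝ)) := by
      apply le_antisymm
      · rw [Submodule.span_le]
        rintro x ⟨ν, hν, rfl⟩
        by_cases h : PP L hL' b₀ ν = 0
        · rw [h]; exact Submodule.zero_mem _
        · exact Submodule.subset_span ⟨ν, Finset.mem_coe.2 (Finset.mem_filter.2
            ⟨Finset.mem_coe.1 hν, h⟩), rfl⟩
      · exact Submodule.span_mono (Set.image_mono (by
          exact_mod_cast Finset.filter_subset _ T))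
    have hli : LinearIndependent ℝ (fun ν : {x // x ∈ T₀} => PP L hL' b₀ ν.1) := by
      rw [Fintype.linearIndependent_iff]
      intro g hg ν₀
      have hdot := congrArg (fun w => w ⬝ᵥ PP L hL' b₀ ν₀.1) hg
      simp only [zero_dotProduct] at hdot
      rw [sumd] at hdot
      have hone : ∀ ν : {x // x ∈ T₀}, ν ≠ ν₀ →
          (g ν • PP L hL' b₀ ν.1) ⬝ᵥ PP L hL' b₀ ν₀.1 = 0 := by
        intro ν hne
        rw [smul_dotProduct, P_ortho L hL' b₀ _ _ (fun h => hne (Subtype.ext h)), smul_zero]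
      rw [Finset.sum_eq_single ν₀ (fun ν _ hne => hone ν hne)
        (fun h => absurd (Finset.mem_univ ν₀) h)] at hdot
      rw [smul_dotProduct, smul_eq_mul] at hdot
      have hP0 : PP L hL' b₀ ν₀.1 ≠ 0 := (Finset.mem_filter.1 ν₀.2).2
      have hdd : PP L hL' b₀ ν₀.1 ⬝ᵥ PP L hL' b₀ ν₀.1 ≠ 0 :=
        fun hcontra => hP0 (dotProduct_self_eq_zero.1 hcontra)
      exact (mul_eq_zero.1 hdot).resolve_right hdd
    have h3 : Module.finrank ℝ (Submodule.span ℝ (PP L hL' b₀ '' (T₀ : Set ℝ))) = T₀.card := by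
      have hr : PP L hL' b₀ '' (T₀ : Set ℝ)
          = Set.range (fun ν : {x // x ∈ T₀} => PP L hL' b₀ ν.1) := by
        ext x
        constructor
        · rintro ⟨ν, hν, rfl⟩; exact ⟨⟨ν, Finset.mem_coe.1 hν⟩, rfl⟩
        · rintro ⟨ν, rfl⟩; exact ⟨ν.1, Finset.mem_coe.2 ν.2, rfl⟩
      rw [hr, finrank_span_eq_card hli, Fintype.card_coe]
    have hset : {μ : ℝ | ∃ v : Fin n → ℝ, L.mulVec v = μ • v ∧ v i ≠ 0} = (T₀ : Set ℝ) := by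
      ext ν
      simp only [Set.mem_setOf_eq]
      constructor
      · rintro ⟨v, hv, hvi⟩
        have hco : ∀ j, hL'.eigenvalues j ≠ ν → uu L hL' j ⬝ᵥ v = 0 :=
          fun j hj => coeff_orth L hL' hs v ν hv j hj
        have hvx : v i = ∑ j, (uu L hL' j ⬝ᵥ v) * uu L hL' j i := by
          conv_lhs => rw [← hexp L hL' v]
          rw [Finset.sum_apply]
          exact Finset.sum_congr rfl fun j _ => by rw [Pi.smul_apply, smul_eq_mul]
        obtain ⟨j, hj0⟩ : ∃ j, (uu L hL' j ⬝ᵥ v) * uu L hL' j i ≠ 0 := by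
          by_contra hcon
          push_neg at hcon
          exact hvi (by rw [hvx]; exact Finset.sum_eq_zero fun j _ => hcon j)
        have hμ : hL'.eigenvalues j = ν := by
          by_contra hne
          exact hj0 (by rw [hco j hne, zero_mul])
        have hui : uu L hL' j i ≠ 0 := fun h => hj0 (by rw [h, mul_zero])
        refine Finset.mem_coe.2 (Finset.mem_filter.2
          ⟨Finset.mem_image.2 ⟨j, Finset.mem_univ j, hμ⟩, ?_⟩)
        intro hP
        have hd := dot_uP L hL' b₀ ν j
        rw [hP, dotProduct_zero, if_pos hμ, hc] at hd
        exact hui hd.symm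
      · intro hν
        obtain ⟨hνT, hP⟩ := Finset.mem_filter.1 (Finset.mem_coe.1 hν)
        refine ⟨PP L hL' b₀ ν, P_eig L hL' b₀ ν, ?_⟩
        have hPi : PP L hL' b₀ ν i = ∑ j ∈ Finset.univ.filter
            (fun j => hL'.eigenvalues j = ν), uu L hL' j i * uu L hL' j i := by
          rw [PP, Finset.sum_apply]
          exact Finset.sum_congr rfl fun j _ => by rw [Pi.smul_apply, smul_eq_mul, hc]
        intro h0
        apply hP
        have hz : ∀ j ∈ Finset.univ.filter (fun j => hL'.eigenvalues j = ν),
            uu L hL' j i * uu L hL' j i = 0 := by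
          have hnn : ∀ j ∈ Finset.univ.filter (fun j => hL'.eigenvalues j = ν),
              0 ≤ uu L hL' j i * uu L hL' j i := fun j _ => mul_self_nonneg _
          exact (Finset.sum_eq_zero_iff_of_nonneg hnn).1 (by rw [← hPi, h0])
        rw [PP]
        apply Finset.sum_eq_zero
        intro j hj
        rw [hc, mul_self_eq_zero.1 (hz j hj), zero_smul]
    rw [h1, h2, h3, hset, Set.ncard_coe_finset]
  · -- Part 2
    intro μ₀ k hk hker b
    set b₀ : Fin n → ℝ := fun r => b r 0 with hb₀
    set m := (Finset.univ.filter fun j => hL'.eigenvalues j = μ₀).card with hm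
    have hkm : k ≤ m := by
      rw [← hker]
      have hle : LinearMap.ker (Matrix.toLin' (L - μ₀ • (1 : Matrix (Fin n) (Fin n) ℝ)))
          ≤ Submodule.span ℝ (((Finset.univ.filter fun j => hL'.eigenvalues j = μ₀).image
            (uu L hL') : Finset (Fin n → ℝ)) : Set (Fin n → ℝ)) := by
        intro x hx
        rw [LinearMap.mem_ker, Matrix.toLin'_apply, sub_mulVec, smul_mulVec,
          one_mulVec, sub_eq_zero] at hx
        have hco : ∀ j, hL'.eigenvalues j ≠ μ₀ → uu L hL' j ⬝ᵥ x = 0 :=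
          fun j hj => coeff_orth L hL' hs x μ₀ hx j hj
        have hxe : x = ∑ j ∈ Finset.univ.filter (fun j => hL'.eigenvalues j = μ₀),
            (uu L hL' j ⬝ᵥ x) • uu L hL' j := by
          conv_lhs => rw [← hexp L hL' x]
          rw [← Finset.sum_filter_add_sum_filter_not Finset.univ
            (fun j => hL'.eigenvalues j = μ₀)]
          have hz2 : ∑ j ∈ Finset.univ.filter (fun j => ¬ hL'.eigenvalues j = μ₀),
              (uu L hL' j ⬝ᵥ x) • uu L hL' j = 0 :=
            Finset.sum_eq_zero fun j hj => by
              rw [hco j (Finset.mem_filter.1 hj).2, zero_smul]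
          rw [hz2, add_zero]
        rw [hxe]
        apply Submodule.sum_mem
        intro j hj
        exact Submodule.smul_mem _ _ (Submodule.subset_span (by
          rw [Finset.coe_image]
          exact ⟨j, Finset.mem_coe.2 hj, rfl⟩))
      calc Module.finrank ℝ (LinearMap.ker (Matrix.toLin'
              (L - μ₀ • (1 : Matrix (Fin n) (Fin n) ℝ))))
          ≤ Module.finrank ℝ (Submodule.span ℝ
            (((Finset.univ.filter fun j => hL'.eigenvalues j = μ₀).image
              (uu L hL') : Finset (Fin n → ℝ)) : Set (Fin n → ℝ))) :=
            Submodule.finrank_mono hle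
        _ ≤ ((Finset.univ.filter fun j => hL'.eigenvalues j = μ₀).image (uu L hL')).card :=
            finrank_span_finset_le_card _
        _ ≤ m := Finset.card_image_le
    have hmn : m ≤ n := le_trans (Finset.card_filter_le _ _) (by simp)
    have hTn : T.card ≤ (n - m) + 1 := by
      have hsub : T ⊆ insert μ₀ ((Finset.univ.filter fun j => hL'.eigenvalues j ≠ μ₀).image
          hL'.eigenvalues) := by
        intro ν hν
        obtain ⟨j, _, rfl⟩ := Finset.mem_image.1 hν
        by_cases hj : hL'.eigenvalues j = μ₀
        · rw [hj]; exact Finset.mem_insert_self _ _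
        · exact Finset.mem_insert_of_mem (Finset.mem_image.2
            ⟨j, Finset.mem_filter.2 ⟨Finset.mem_univ _, hj⟩, rfl⟩)
      have hcard : (Finset.univ.filter fun j => hL'.eigenvalues j ≠ μ₀).card = n - m := by
        have h : (Finset.univ.filter fun j => hL'.eigenvalues j ≠ μ₀)
            = Finset.univ \ (Finset.univ.filter fun j => hL'.eigenvalues j = μ₀) := by
          ext j; simp
        rw [h, Finset.card_sdiff_of_subset (Finset.filter_subset _ _), Finset.card_univ,
          Fintype.card_fin, hm]
      calc T.card ≤ _ := Finset.card_le_card hsub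
        _ ≤ ((Finset.univ.filter fun j => hL'.eigenvalues j ≠ μ₀).image
              hL'.eigenvalues).card + 1 := Finset.card_insert_le _ _
        _ ≤ (Finset.univ.filter fun j => hL'.eigenvalues j ≠ μ₀).card + 1 :=
            Nat.add_le_add_right Finset.card_image_le 1
        _ = (n - m) + 1 := by rw [hcard]
    have hrank : (kalman (-L) b).rank ≤ T.card := by
      rw [rank_kalman L b, span_eq L hL']
      have himg : PP L hL' b₀ '' (T : Set ℝ)
          = ((T.image (PP L hL' b₀)) : Set (Fin n → ℝ)) := (Finset.coe_image).symm
      rw [himg]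
      exact le_trans (finrank_span_finset_le_card _) Finset.card_image_le
    rw [hm] at hkm hmn hTn
    omega
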